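/- Assume s ≥ r, N ≥ mn, and F is a finite field with q ≥ max(N, 2) elements. Then the optimum recovery threshold for distributed matrix multiplication equals mn: there exists an mn-recoverable computation strategy (namely the (1,m)-polynomial code built from N pairwise distinct evaluation points), and every k-recoverable computation strategy satisfies k ≥ mn. Hence mn = min{ k : there exists a k-recoverable computation strategy }. -/

import Mathlib

open Matrix BigOperators

-- achievability lemma
private lemma poly_code_ach {F : Type*} [Field F] [Fintype F] {s p u m n N : ℕ}
    (x : Fin N → F) (hx : Function.Injective x)
    (S : Finset (Fin N)) (hS : S.card = m * n) :
    ∃ D : ({i : Fin N // i ∈ S} → Matrix (Fin p) (Fin u) F) →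
          Matrix (Fin m × Fin p) (Fin n × Fin u) F,
      ∀ (A : Matrix (Fin s) (Fin m × Fin p) F) (B : Matrix (Fin s) (Fin n × Fin u) F),
        D (fun i =>
            (∑ j : Fin m, x i.1 ^ (j : ℕ) • A.submatrix id (fun a => (j, a)))ᵀ *
            (∑ k : Fin n, x i.1 ^ ((k : ℕ) * m) • B.submatrix id (fun b => (k, b))))
          = Aᵀ * B := by
  classical
  let eS : Fin (m*n) → {i : Fin N // i ∈ S} := fun l => (S.orderIsoOfFin hS l)
  have heS : Function.Injective eS := fun a b h => (S.orderIsoOfFin hS).injective h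
  let y : Fin (m*n) → F := fun l => x ((eS l) : Fin N)
  have hy : Function.Injective y := by
    intro a b h
    exact heS (Subtype.val_injective (hx h))
  set V := Matrix.vandermonde y with hVdef
  have hV : IsUnit V.det := by
    rw [isUnit_iff_ne_zero, Matrix.det_vandermonde_ne_zero_iff]; exact hy
  have hVinv : V⁻¹ * V = 1 := Matrix.nonsing_inv_mul V hV
  let ee : Fin n × Fin m ≃ Fin (m*n) := finProdFinEquiv.trans (finCongr (mul_comm n m))
  refine ⟨fun c => fun jc kb => ∑ l, V⁻¹ (ee (kb.1, jc.1)) l * c (eS l) jc.2 kb.2, ?_⟩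
  intro A B
  funext jc kb
  obtain ⟨j, a⟩ := jc
  obtain ⟨k, b⟩ := kb
  simp only
  have hw : ∀ l : Fin (m*n),
      ((∑ j' : Fin m, x ((eS l) : Fin N) ^ (j' : ℕ) • A.submatrix id (fun a => (j', a)))ᵀ *
       (∑ k' : Fin n, x ((eS l) : Fin N) ^ ((k' : ℕ) * m) • B.submatrix id (fun b => (k', b)))) a b
      = ∑ w : Fin (m*n), V l w * (Aᵀ * B) ((ee.symm w).2, a) ((ee.symm w).1, b) := by
    intro l
    rw [← Equiv.sum_comp ee (fun w => V l w * (Aᵀ*B) ((ee.symm w).2, a) ((ee.symm w).1, b))]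
    simp only [Equiv.symm_apply_apply]
    rw [Matrix.mul_apply]
    have hval : ∀ pr : Fin n × Fin m, ((ee pr : Fin (m*n)) : ℕ) = (pr.2 : ℕ) + m * (pr.1 : ℕ) := by
      intro pr
      simp [ee, finProdFinEquiv]
    simp only [Matrix.transpose_apply, Matrix.sum_apply, Matrix.smul_apply,
      Matrix.submatrix_apply, id_eq, smul_eq_mul, Matrix.mul_apply, hVdef,
      Matrix.vandermonde_apply, hval, Finset.mul_sum]
    rw [Fintype.sum_prod_type]
    rw [Finset.sum_comm]
    congr 1
    funext σ
    simp only [Finset.sum_mul]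
    rw [Finset.sum_comm]
    congr 1; funext j'; congr 1; funext i
    simp only [y]
    ring
  simp only [hw]
  simp only [Finset.mul_sum]
  rw [Finset.sum_comm]
  have : ∀ w : Fin (m*n), ∑ l, V⁻¹ (ee (k, j)) l * (V l w * (Aᵀ * B) ((ee.symm w).2, a) ((ee.symm w).1, b))
      = (1 : Matrix (Fin (m*n)) (Fin (m*n)) F) (ee (k,j)) w * (Aᵀ * B) ((ee.symm w).2, a) ((ee.symm w).1, b) := by
    intro w
    simp only [← mul_assoc, ← Finset.sum_mul]
    rw [← Matrix.mul_apply, hVinv]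
  simp only [this, Matrix.one_apply]
  simp only [ite_mul, one_mul, zero_mul]
  rw [Finset.sum_ite_eq Finset.univ (ee (k,j))]
  simp


private lemma strategy_lower_bound {F : Type*} [Field F] [Fintype F] {s p u m n N k : ℕ}
    (hp : 0 < p) (hu : 0 < u) (hs : m * p ≤ s) (hN : m * n ≤ N)
    (f : Fin N → Matrix (Fin s) (Fin m × Fin p) F → Matrix (Fin s) (Fin p) F)
    (g : Fin N → Matrix (Fin s) (Fin n × Fin u) F → Matrix (Fin s) (Fin u) F)
    (h : ∀ S : Finset (Fin N), S.card = k →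
      ∃ D : ({i : Fin N // i ∈ S} → Matrix (Fin p) (Fin u) F) →
            Matrix (Fin m × Fin p) (Fin n × Fin u) F,
        ∀ (A : Matrix (Fin s) (Fin m × Fin p) F) (B : Matrix (Fin s) (Fin n × Fin u) F),
          D (fun i => (f i.1 A)ᵀ * g i.1 B) = Aᵀ * B) :
    m * n ≤ k := by
  classical
  by_cases hkN : k ≤ N
  · obtain ⟨S, -, hScard⟩ := Finset.exists_subset_card_eq (s := (Finset.univ : Finset (Fin N))) (n := k)
      (by simpa using hkN)
    obtain ⟨D, hD⟩ := h S hScard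
    -- embedding of column indices of A into rows
    let ι : Fin m × Fin p → Fin s := fun c => Fin.castLE hs (finProdFinEquiv c)
    have hι : Function.Injective ι :=
      (Fin.castLE_injective hs).comp finProdFinEquiv.injective
    let A₀ : Matrix (Fin s) (Fin m × Fin p) F := fun i c => if i = ι c then 1 else 0
    have hsurj : Function.Surjective D := by
      intro M
      let B₀ : Matrix (Fin s) (Fin n × Fin u) F := fun i d =>
        if h : ∃ c, ι c = i then M h.choose d else 0
      refine ⟨fun i => (f i.1 A₀)ᵀ * g i.1 B₀, ?_⟩
      rw [hD A₀ B₀]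
      funext c d
      have h1 : (A₀ᵀ * B₀) c d = B₀ (ι c) d := by
        rw [Matrix.mul_apply]
        simp only [Matrix.transpose_apply]
        simp only [A₀, ite_mul, one_mul, zero_mul]
        rw [Finset.sum_ite_eq' Finset.univ (ι c)]
        simp
      rw [h1]
      have hex : ∃ c', ι c' = ι c := ⟨c, rfl⟩
      have : hex.choose = c := hι hex.choose_spec
      simp only [B₀, dif_pos hex, this]
    have hcard := Fintype.card_le_of_surjective D hsurj
    have c1 : Fintype.card (Matrix (Fin m × Fin p) (Fin n × Fin u) F)
        = Fintype.card F ^ ((n * u) * (m * p)) := by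
      rw [Fintype.card_congr (Matrix.of (m := Fin m × Fin p) (n := Fin n × Fin u) (α := F)).symm]
      simp [Fintype.card_fun, pow_mul]
    have c2 : Fintype.card (Matrix (Fin p) (Fin u) F) = Fintype.card F ^ (u * p) := by
      rw [Fintype.card_congr (Matrix.of (m := Fin p) (n := Fin u) (α := F)).symm]
      simp [Fintype.card_fun, pow_mul]
    rw [c1, Fintype.card_fun, c2, Fintype.card_coe, hScard, ← pow_mul] at hcard
    have hq2 : 1 < Fintype.card F := Fintype.one_lt_card
    have hexp := (Nat.pow_le_pow_iff_right hq2).mp hcard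
    have : (m * n) * (p * u) ≤ k * (p * u) := by
      calc (m * n) * (p * u) = (n * u) * (m * p) := by ring
        _ ≤ u * p * k := hexp
        _ = k * (p * u) := by ring
    exact Nat.le_of_mul_le_mul_right this (Nat.mul_pos hp hu)
  · exact le_trans hN (le_of_not_ge hkN)

/-- Theorem 1: the optimum recovery threshold for distributed matrix
multiplication is exactly `mn`. The (1,m)-polynomial code built from any `N` pairwise
distinct evaluation points is `mn`-recoverable, and `mn` is the minimum `k` for which
some `k`-recoverable computation strategy exists. Columns of `A` are indexed by
`Fin m × Fin p` (`r = m·p`) and those of `B` by `Fin n × Fin u` (`t = n·u`); the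
`j`-th column block of `A` is `A.submatrix id (fun a => (j, a))`. -/
theorem optimum_recovery_threshold_eq_mn {F : Type*} [Field F] [Fintype F]
    {s p u m n N : ℕ}
    (hm : 0 < m) (hn : 0 < n) (hp : 0 < p) (hu : 0 < u)
    (hs : m * p ≤ s) (hN : m * n ≤ N) (hq : N ≤ Fintype.card F) :
    (∀ x : Fin N → F, Function.Injective x →
      ∀ S : Finset (Fin N), S.card = m * n →
        ∃ D : ({i : Fin N // i ∈ S} → Matrix (Fin p) (Fin u) F) →
              Matrix (Fin m × Fin p) (Fin n × Fin u) F,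
          ∀ (A : Matrix (Fin s) (Fin m × Fin p) F) (B : Matrix (Fin s) (Fin n × Fin u) F),
            D (fun i =>
                (∑ j : Fin m, x i.1 ^ (j : ℕ) • A.submatrix id (fun a => (j, a)))ᵀ *
                (∑ k : Fin n, x i.1 ^ ((k : ℕ) * m) • B.submatrix id (fun b => (k, b))))
              = Aᵀ * B)
    ∧
    IsLeast {k : ℕ |
      ∃ (f : Fin N → Matrix (Fin s) (Fin m × Fin p) F → Matrix (Fin s) (Fin p) F)
        (g : Fin N → Matrix (Fin s) (Fin n × Fin u) F → Matrix (Fin s) (Fin u) F),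
        ∀ S : Finset (Fin N), S.card = k →
          ∃ D : ({i : Fin N // i ∈ S} → Matrix (Fin p) (Fin u) F) →
                Matrix (Fin m × Fin p) (Fin n × Fin u) F,
            ∀ (A : Matrix (Fin s) (Fin m × Fin p) F) (B : Matrix (Fin s) (Fin n × Fin u) F),
              D (fun i => (f i.1 A)ᵀ * g i.1 B) = Aᵀ * B} (m * n) := by
  refine ⟨fun x hx S hS => poly_code_ach x hx S hS, ?_, ?_⟩
  · obtain ⟨e⟩ : Nonempty (Fin N ↪ F) :=
      Function.Embedding.nonempty_of_card_le (by simpa using hq)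
    refine ⟨fun i A => ∑ j : Fin m, e i ^ (j : ℕ) • A.submatrix id (fun a => (j, a)),
            fun i B => ∑ k : Fin n, e i ^ ((k : ℕ) * m) • B.submatrix id (fun b => (k, b)),
            fun S hS => poly_code_ach e e.injective S hS⟩
  · intro k hk
    obtain ⟨f, g, h⟩ := hk
    exact strategy_lower_bound hp hu hs hN f g h
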